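/- arXiv:2306.03474 — 2 statements merged into one kernel-verified Lean document; each statement's English description precedes it below -/
import Mathlib

section
/- Let γ ≥ 1 be an integer and let G be a graph with girth at least 6γ. If P and Q are paths of length γ in G whose edge sets share at least one edge, then E(P) ∩ E(Q) is the edge set of a path that occurs as a (consecutive) subpath of both P and Q. -/
open SimpleGraph

-- splitting a walk at a dart
lemma split_at_dart {V : Type} {H : SimpleGraph V} {u v c d : V} (h : H.Adj c d)
    (p : H.Walk u v) (hd : SimpleGraph.Dart.mk (c, d) h ∈ p.darts) :
    ∃ (p₁ : H.Walk u c) (p₂ : H.Walk d v), p = p₁.append (Walk.cons h p₂) := by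
  induction p with
  | nil => simp at hd
  | @cons a b v ha p ih =>
    rw [Walk.darts_cons, List.mem_cons] at hd
    rcases hd with hd | hd
    · have h2 : (c, d) = (a, b) := congrArg SimpleGraph.Dart.toProd hd
      obtain ⟨rfl, rfl⟩ : c = a ∧ d = b := by
        exact ⟨congrArg Prod.fst h2, congrArg Prod.snd h2⟩
      exact ⟨Walk.nil, p, rfl⟩
    · obtain ⟨p₁, p₂, rfl⟩ := ih hd
      exact ⟨Walk.cons ha p₁, p₂, by rw [Walk.cons_append]⟩

lemma getVert_append_le {V : Type} {H : SimpleGraph V} {u v w : V}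
    (p : H.Walk u v) (q : H.Walk v w) {i : ℕ} (hi : i ≤ p.length) :
    (p.append q).getVert i = p.getVert i := by
  rw [Walk.getVert_append]
  split
  · rfl
  · have : i = p.length := le_antisymm hi (not_lt.mp ‹_›)
    subst this
    simp [Walk.getVert_zero, Walk.getVert_length]

lemma key {V : Type} {H : SimpleGraph V} (hH : H.IsAcyclic) {c a b : V}
    (s : H.Walk c a) (t : H.Walk c b) (hs : s.IsPath) (ht : t.IsPath)
    {f : Sym2 V} (hfs : f ∈ s.edges) (hft : f ∈ t.edges) :
    s.getVert 1 = t.getVert 1 := by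
  classical
  -- get darts
  obtain ⟨Ds, hDs, hDse⟩ := List.mem_map.mp hfs
  obtain ⟨Dt, hDt, hDte⟩ := List.mem_map.mp hft
  have hedge : Dt.edge = Ds.edge := by rw [hDse, hDte]
  rw [SimpleGraph.dart_edge_eq_iff] at hedge
  obtain ⟨⟨g₁, g₂⟩, hadj⟩ := Ds
  obtain ⟨sA, sB, hsdec⟩ := split_at_dart hadj s hDs
  have hsdec' : s = (sA.concat hadj).append sB := by
    rw [hsdec, Walk.concat_eq_append, ← Walk.append_assoc, Walk.cons_append, Walk.nil_append]
  have hP1 : (sA.concat hadj).IsPath := (hsdec' ▸ hs).of_append_left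
  rcases hedge with rfl | rfl
  · -- same orientation
    obtain ⟨tA, tB, htdec⟩ := split_at_dart hadj t hDt
    have htdec' : t = (tA.concat hadj).append tB := by
      rw [htdec, Walk.concat_eq_append, ← Walk.append_assoc, Walk.cons_append, Walk.nil_append]
    have hQ1 : (tA.concat hadj).IsPath := (htdec' ▸ ht).of_append_left
    have huniq := hH.path_unique ⟨sA.concat hadj, hP1⟩ ⟨tA.concat hadj, hQ1⟩
    have heq : sA.concat hadj = tA.concat hadj := Subtype.ext_iff.mp huniq
    have l1 : 1 ≤ (sA.concat hadj).length := by
      rw [Walk.length_concat]; omega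
    have l2 : 1 ≤ (tA.concat hadj).length := by
      rw [Walk.length_concat]; omega
    calc s.getVert 1 = (sA.concat hadj).getVert 1 := by
          rw [hsdec']; exact getVert_append_le _ _ l1
      _ = (tA.concat hadj).getVert 1 := by rw [heq]
      _ = t.getVert 1 := by rw [htdec']; exact (getVert_append_le _ _ l2).symm
  · -- opposite orientation: contradiction
    exfalso
    obtain ⟨tA, tB, htdec⟩ := split_at_dart hadj.symm t (by simpa using hDt)
    have htA : tA.IsPath := (htdec ▸ ht).of_append_left
    have huniq := hH.path_unique ⟨sA.concat hadj, hP1⟩ ⟨tA, htA⟩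
    have heq : sA.concat hadj = tA := Subtype.ext_iff.mp huniq
    have hfP1 : f ∈ (sA.concat hadj).edges := by
      rw [Walk.edges_concat, ← hDse]
      simp [SimpleGraph.Dart.edge]
    have hfint : f ∈ tA.edges := heq ▸ hfP1
    have hnodup := ht.edges_nodup
    rw [htdec, Walk.edges_append, Walk.edges_cons] at hnodup
    have hdisj := (List.nodup_append'.mp hnodup).2.2
    have : f ∈ s(g₂, g₁) :: tB.edges := by
      rw [← hDse]
      simp [SimpleGraph.Dart.edge, Sym2.eq_swap]
    exact hdisj hfint this

lemma suf {V : Type} {H : SimpleGraph V} (hH : H.IsAcyclic) {c a : V}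
    (s : H.Walk c a) : ∀ {b : V} (t : H.Walk c b), s.IsPath → t.IsPath →
    ∃ (m : V) (w : H.Walk c m) (s₂ : H.Walk m a) (t₂ : H.Walk m b),
      s = w.append s₂ ∧ t = w.append t₂ ∧ ∀ f, f ∈ s₂.edges → f ∉ t₂.edges := by
  induction s with
  | nil => exact fun t _ _ => ⟨_, Walk.nil, Walk.nil, t, rfl, rfl, by simp⟩
  | @cons c c₁ a ha s' ih =>
    intro b t hs ht
    by_cases hex : ∃ f, f ∈ (Walk.cons ha s').edges ∧ f ∈ t.edges
    · obtain ⟨f, hfs, hft⟩ := hex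
      have h1 := key hH (Walk.cons ha s') t hs ht hfs hft
      cases t with
      | nil => simp at hft
      | @cons c c₂ b hb t' =>
        have : c₁ = c₂ := by
          have h1' := h1
          rw [show (1:ℕ) = 0 + 1 from rfl, Walk.getVert_cons_succ, Walk.getVert_cons_succ,
            Walk.getVert_zero, Walk.getVert_zero] at h1'
          exact h1'
        subst this
        obtain ⟨m, w, s₂, t₂, e1, e2, e3⟩ := ih t' hs.of_cons ht.of_cons
        exact ⟨m, Walk.cons ha w, s₂, t₂, by rw [Walk.cons_append, ← e1],
          by rw [Walk.cons_append, ← e2], e3⟩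
    · exact ⟨c, Walk.nil, Walk.cons ha s', t, rfl, rfl,
        fun f hf hft => hex ⟨f, hf, hft⟩⟩

lemma cross {V : Type} {H : SimpleGraph V} (hH : H.IsAcyclic) {c d u y : V}
    (hcd : H.Adj c d) (pA : H.Walk u c) (qB : H.Walk d y)
    (hpA : pA.IsPath) (hd : d ∉ pA.support) (hqB : qB.IsPath) (hc : c ∉ qB.support)
    {f : Sym2 V} (hf1 : f ∈ pA.edges) (hf2 : f ∈ qB.edges) : False := by
  have hlen : 1 ≤ qB.length := by
    cases qB with
    | nil => simp at hf2
    | cons h q => simp [Walk.length_cons]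
  have hα : (Walk.cons hcd.symm pA.reverse).IsPath := by
    rw [Walk.cons_isPath_iff]
    exact ⟨hpA.reverse, by rwa [Walk.support_reverse, List.mem_reverse]⟩
  have hfα : f ∈ (Walk.cons hcd.symm pA.reverse).edges := by
    rw [Walk.edges_cons, List.mem_cons]
    right; rwa [Walk.edges_reverse, List.mem_reverse]
  have hkey := key hH (Walk.cons hcd.symm pA.reverse) qB hα hqB hfα hf2
  rw [show (1:ℕ) = 0 + 1 from rfl, Walk.getVert_cons_succ, Walk.getVert_zero] at hkey
  exact hc (Walk.mem_support_iff_exists_getVert.mpr ⟨1, hkey.symm, hlen⟩)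

lemma path_facts {V : Type} {H : SimpleGraph V} {u v c d : V} (hcd : H.Adj c d)
    (pA : H.Walk u c) (pB : H.Walk d v)
    (hp : (pA.append (Walk.cons hcd pB)).IsPath) :
    pA.IsPath ∧ pB.IsPath ∧ d ∉ pA.support ∧ c ∉ pB.support := by
  have hpA := hp.of_append_left
  have hcons := hp.of_append_right
  have hpB := hcons.of_cons
  have hcB : c ∉ pB.support := ((Walk.cons_isPath_iff _ _).mp hcons).2
  have hnodup := hp.support_nodup
  rw [Walk.support_append, Walk.support_cons, List.tail_cons] at hnodup
  have hdisj := List.disjoint_of_nodup_append hnodup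
  exact ⟨hpA, hpB, fun hdm => hdisj hdm pB.start_mem_support, hcB⟩

lemma support_infix {V : Type} {H : SimpleGraph V} {u a b v : V}
    (s : H.Walk u a) (r : H.Walk a b) (t : H.Walk b v) :
    r.support <:+: (s.append (r.append t)).support := by
  refine ⟨s.reverse.support.tail.reverse, t.support.tail, ?_⟩
  have hs : s.support = s.reverse.support.tail.reverse ++ [a] := by
    have h1 : s.support = s.reverse.support.reverse := by
      rw [Walk.support_reverse, List.reverse_reverse]
    conv_lhs => rw [h1, Walk.support_eq_cons s.reverse]
    simp
  have hr : r.support = a :: r.support.tail := Walk.support_eq_cons r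
  rw [Walk.support_append, Walk.support_append,
    List.tail_append_of_ne_nil (r.support_ne_nil), hs]
  conv_lhs => rw [hr]
  simp only [List.append_assoc, List.cons_append, List.singleton_append, List.nil_append]

lemma main_aux {V : Type} {H : SimpleGraph V} (hH : H.IsAcyclic)
    {u v x y c d : V} (hcd : H.Adj c d)
    (p : H.Walk u v) (q : H.Walk x y) (hp : p.IsPath) (hq : q.IsPath)
    (hdp : SimpleGraph.Dart.mk (c, d) hcd ∈ p.darts)
    (hdq : SimpleGraph.Dart.mk (c, d) hcd ∈ q.darts) :
    ∃ (a b : V) (r : H.Walk a b), r.IsPath ∧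
      (∀ e, e ∈ r.edges ↔ e ∈ p.edges ∧ e ∈ q.edges) ∧
      r.support <:+: p.support ∧ r.support <:+: q.support := by
  obtain ⟨pA, pB, rfl⟩ := split_at_dart hcd p hdp
  obtain ⟨qA, qB, rfl⟩ := split_at_dart hcd q hdq
  obtain ⟨hpA, hpB, hdpA, hcpB⟩ := path_facts hcd pA pB hp
  obtain ⟨hqA, hqB, hdqA, hcqB⟩ := path_facts hcd qA qB hq
  obtain ⟨m₁, w₁, s₂, t₂, hps1, hqs1, hdisj1⟩ :=
    suf hH pA.reverse qA.reverse hpA.reverse hqA.reverse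
  obtain ⟨m₂, w₂, s₂', t₂', hps2, hqs2, hdisj2⟩ := suf hH pB qB hpB hqB
  have hpA' : pA = s₂.reverse.append w₁.reverse := by
    have h := congrArg Walk.reverse hps1
    rwa [Walk.reverse_reverse, Walk.reverse_append] at h
  have hqA' : qA = t₂.reverse.append w₁.reverse := by
    have h := congrArg Walk.reverse hqs1
    rwa [Walk.reverse_reverse, Walk.reverse_append] at h
  set r : H.Walk m₁ m₂ := w₁.reverse.append (Walk.cons hcd w₂) with hr
  have hpdec : pA.append (Walk.cons hcd pB) = s₂.reverse.append (r.append s₂') := by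
    rw [hpA', hps2, hr]
    simp only [Walk.cons_append, ← Walk.append_assoc]
  have hqdec : qA.append (Walk.cons hcd qB) = t₂.reverse.append (r.append t₂') := by
    rw [hqA', hqs2, hr]
    simp only [Walk.cons_append, ← Walk.append_assoc]
  refine ⟨m₁, m₂, r, ?_, ?_, ?_, ?_⟩
  · exact ((hpdec ▸ hp).of_append_right).of_append_left
  · intro e
    constructor
    · intro he
      constructor
      · rw [hpdec]
        simp only [Walk.edges_append, List.mem_append]
        exact Or.inr (Or.inl he)
      · rw [hqdec]
        simp only [Walk.edges_append, List.mem_append]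
        exact Or.inr (Or.inl he)
    · rintro ⟨hep, heq⟩
      by_contra henr
      have hp3 : e ∈ s₂.edges ∨ e ∈ s₂'.edges := by
        rw [hpdec] at hep
        simp only [Walk.edges_append, List.mem_append] at hep
        rcases hep with h | h | h
        · left; rwa [Walk.edges_reverse, List.mem_reverse] at h
        · exact absurd h henr
        · exact Or.inr h
      have hq3 : e ∈ t₂.edges ∨ e ∈ t₂'.edges := by
        rw [hqdec] at heq
        simp only [Walk.edges_append, List.mem_append] at heq
        rcases heq with h | h | h
        · left; rwa [Walk.edges_reverse, List.mem_reverse] at h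
        · exact absurd h henr
        · exact Or.inr h
      have hs2pA : e ∈ s₂.edges → e ∈ pA.edges := fun h => by
        rw [hpA']
        simp only [Walk.edges_append, List.mem_append, Walk.edges_reverse, List.mem_reverse]
        exact Or.inl h
      have ht2qA : e ∈ t₂.edges → e ∈ qA.edges := fun h => by
        rw [hqA']
        simp only [Walk.edges_append, List.mem_append, Walk.edges_reverse, List.mem_reverse]
        exact Or.inl h
      have hs2pB : e ∈ s₂'.edges → e ∈ pB.edges := fun h => by
        rw [hps2]
        simp only [Walk.edges_append, List.mem_append]
        exact Or.inr h
      have ht2qB : e ∈ t₂'.edges → e ∈ qB.edges := fun h => by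
        rw [hqs2]
        simp only [Walk.edges_append, List.mem_append]
        exact Or.inr h
      rcases hp3 with h1 | h1 <;> rcases hq3 with h2 | h2
      · exact hdisj1 e h1 h2
      · exact cross hH hcd pA qB hpA hdpA hqB hcqB (hs2pA h1) (ht2qB h2)
      · exact cross hH hcd qA pB hqA hdqA hpB hcpB (ht2qA h2) (hs2pB h1)
      · exact hdisj2 e h1 h2
  · rw [hpdec]; exact support_infix _ _ _
  · rw [hqdec]; exact support_infix _ _ _

theorem statement8 (γ : ℕ) (hγ : 1 ≤ γ) (V : Type) (G : SimpleGraph V)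
    (hgirth : ((6 * γ : ℕ) : ℕ∞) ≤ G.egirth)
    (u v x y : V) (p : G.Walk u v) (q : G.Walk x y)
    (hp : p.IsPath) (hq : q.IsPath) (hpl : p.length = γ) (hql : q.length = γ)
    (hshare : ∃ e, e ∈ p.edges ∧ e ∈ q.edges) :
    ∃ (a b : V) (r : G.Walk a b), r.IsPath ∧
      (∀ e, e ∈ r.edges ↔ e ∈ p.edges ∧ e ∈ q.edges) ∧
      r.support <:+: p.support ∧
      (r.support <:+: q.support ∨ r.support.reverse <:+: q.support) := by
  classical
  set S : Set (Sym2 V) := {e | e ∈ p.edges ∨ e ∈ q.edges} with hSdef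
  have hS : S ⊆ G.edgeSet := by
    rintro e (he | he)
    · exact p.edges_subset_edgeSet he
    · exact q.edges_subset_edgeSet he
  set H : SimpleGraph V := SimpleGraph.fromEdgeSet S with hHdef
  have hle : H ≤ G := by
    rw [hHdef, ← fromEdgeSet_edgeSet G]
    exact fromEdgeSet_mono hS
  have hmemH : ∀ e ∈ S, e ∈ H.edgeSet := by
    intro e he
    rw [hHdef, edgeSet_fromEdgeSet]
    exact ⟨he, fun hdiag => G.not_isDiag_of_mem_edgeSet (hS he) hdiag⟩
  have hpe : ∀ e ∈ p.edges, e ∈ H.edgeSet := fun e he => hmemH e (Or.inl he)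
  have hqe : ∀ e ∈ q.edges, e ∈ H.edgeSet := fun e he => hmemH e (Or.inr he)
  set p' : H.Walk u v := p.transfer H hpe with hp'def
  set q' : H.Walk x y := q.transfer H hqe with hq'def
  have hp' : p'.IsPath := by
    rw [Walk.isPath_def, hp'def, Walk.support_transfer]
    exact hp.support_nodup
  have hq' : q'.IsPath := by
    rw [Walk.isPath_def, hq'def, Walk.support_transfer]
    exact hq.support_nodup
  -- H is acyclic
  have hH : H.IsAcyclic := by
    intro a w hw
    have hw' : (w.mapLe hle).IsCycle := hw.mapLe hle
    have h1 := Walk.length_map (f := SimpleGraph.Hom.ofLE hle) (p := w)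
    have h2 : ((6 * γ : ℕ) : ℕ∞) ≤ ((w.mapLe hle).length : ℕ∞) :=
      le_egirth.mp hgirth a (w.mapLe hle) hw'
    have h3 : 6 * γ ≤ w.length := by
      have h2' : ((6 * γ : ℕ) : ℕ∞) ≤ (w.length : ℕ∞) := by
        rwa [show (w.mapLe hle).length = w.length from h1] at h2
      exact_mod_cast h2'
    -- but the cycle's edges are a nodup sublist of p.edges ++ q.edges
    have hnodup : w.edges.Nodup := hw.edges_nodup
    have hsub : w.edges ⊆ p.edges ++ q.edges := by
      intro e he
      have : e ∈ H.edgeSet := w.edges_subset_edgeSet he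
      rw [hHdef, edgeSet_fromEdgeSet] at this
      rcases this.1 with h | h
      · exact List.mem_append.mpr (Or.inl h)
      · exact List.mem_append.mpr (Or.inr h)
    have h4 : w.edges.length ≤ (p.edges ++ q.edges).length :=
      (List.subperm_of_subset hnodup hsub).length_le
    rw [Walk.length_edges, List.length_append, Walk.length_edges, Walk.length_edges,
      hpl, hql] at h4
    omega
  -- get shared darts
  obtain ⟨e, hep, heq⟩ := hshare
  have hep' : e ∈ p'.edges := by rwa [hp'def, Walk.edges_transfer]
  have heq' : e ∈ q'.edges := by rwa [hq'def, Walk.edges_transfer]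
  obtain ⟨D, hD, hDe⟩ := List.mem_map.mp hep'
  obtain ⟨D', hD', hD'e⟩ := List.mem_map.mp heq'
  have hedge : D'.edge = D.edge := by rw [hDe, hD'e]
  rw [SimpleGraph.dart_edge_eq_iff] at hedge
  obtain ⟨⟨c, d⟩, hcd⟩ := D
  rcases hedge with rfl | rfl
  · -- same orientation
    obtain ⟨a, b, r, hr1, hr2, hr3, hr4⟩ := main_aux hH hcd p' q' hp' hq' hD hD'
    refine ⟨a, b, r.transfer G (fun e he => edgeSet_mono hle (r.edges_subset_edgeSet he)),
      ?_, ?_, ?_, Or.inl ?_⟩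
    · rw [Walk.isPath_def, Walk.support_transfer]; exact hr1.support_nodup
    · intro f
      rw [Walk.edges_transfer]
      have := hr2 f
      rwa [hp'def, Walk.edges_transfer, hq'def, Walk.edges_transfer] at this
    · rw [Walk.support_transfer]
      have := hr3
      rwa [hp'def, Walk.support_transfer] at this
    · rw [Walk.support_transfer]
      have := hr4
      rwa [hq'def, Walk.support_transfer] at this
  · -- opposite orientation: use q'.reverse
    have hDrev : SimpleGraph.Dart.mk (c, d) hcd ∈ q'.reverse.darts :=
      Walk.mem_darts_reverse.mpr hD'
    obtain ⟨a, b, r, hr1, hr2, hr3, hr4⟩ :=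
      main_aux hH hcd p' q'.reverse hp' hq'.reverse hD hDrev
    refine ⟨a, b, r.transfer G (fun e he => edgeSet_mono hle (r.edges_subset_edgeSet he)),
      ?_, ?_, ?_, Or.inr ?_⟩
    · rw [Walk.isPath_def, Walk.support_transfer]; exact hr1.support_nodup
    · intro f
      rw [Walk.edges_transfer]
      have := hr2 f
      rwa [hp'def, Walk.edges_transfer, Walk.edges_reverse, List.mem_reverse,
        hq'def, Walk.edges_transfer] at this
    · rw [Walk.support_transfer]
      have := hr3
      rwa [hp'def, Walk.support_transfer] at this
    · rw [Walk.support_transfer]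
      have h := hr4
      rw [Walk.support_reverse, hq'def, Walk.support_transfer] at h
      have h2 := h.reverse
      rwa [List.reverse_reverse] at h2
end

section
/- Let γ ≥ 1, let S be a finite set equipped with a fixed-point-free involution, and let G be a graph with girth at least 6γ. Let P be a path of length γ in G, and let ℓ and ℓ' be two reduced S-labellings of G that assign the same label to every edge of G not belonging to E(P). Suppose there exists a path Q of length γ in G with Q ≠ P such that ℓ(P) = ℓ(Q) and ℓ'(P) = ℓ'(Q). Then ℓ = ℓ' (in particular ℓ and ℓ' agree on every edge of P). -/
open SimpleGraph

/-- An `S`-labelling of `G` (with `inv` the formal-inverse involution on `S`). -/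
def IsGoodLabelling {V S : Type*} (G : SimpleGraph V) (inv : S → S) (ℓ : V → V → S) : Prop :=
  ∀ x y, G.Adj x y → ℓ y x = inv (ℓ x y)

/-- The labelling `ℓ` is reduced: distinct neighbours of a vertex get distinct labels. -/
def ReducedLabelling {V S : Type*} (G : SimpleGraph V) (ℓ : V → V → S) : Prop :=
  ∀ v u w, G.Adj v u → G.Adj v w → u ≠ w → ℓ v u ≠ ℓ v w

/-- The word read along a walk. -/
def walkWord {V S : Type*} {G : SimpleGraph V} (ℓ : V → V → S) {u v : V} (p : G.Walk u v) :
    List S := p.darts.map (fun d => ℓ d.toProd.1 d.toProd.2)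

namespace Statement12Aux

variable {V : Type} {S : Type} {G : SimpleGraph V}

lemma word_spec (ℓ : V → V → S) {u v : V} (p : G.Walk u v) :
    walkWord ℓ p = (List.range p.length).map (fun i => ℓ (p.getVert i) (p.getVert (i+1))) := by
  induction p with
  | nil => simp [walkWord]
  | cons h q ih =>
    simp only [walkWord, Walk.darts_cons, List.map_cons, Walk.length_cons,
      List.range_succ_eq_map, Walk.getVert_cons_succ, List.map_map]
    refine List.cons_eq_cons.mpr ⟨by simp, ?_⟩
    rw [walkWord] at ih
    rw [ih]
    exact List.map_eq_map_iff.mpr (fun i _ => by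
      simp [Function.comp, Nat.succ_eq_add_one, Walk.getVert_cons_succ])

lemma edges_spec {u v : V} (p : G.Walk u v) :
    p.edges = (List.range p.length).map (fun i => s(p.getVert i, p.getVert (i+1))) := by
  induction p with
  | nil => simp
  | cons h q ih =>
    simp only [Walk.edges_cons, Walk.length_cons, List.range_succ_eq_map,
      Walk.getVert_cons_succ, List.map_map, List.map_cons]
    refine List.cons_eq_cons.mpr ⟨by simp, ?_⟩
    rw [ih]
    exact List.map_eq_map_iff.mpr (fun i _ => by
      simp [Function.comp, Nat.succ_eq_add_one, Walk.getVert_cons_succ])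

lemma getVert_mem_support {u v : V} (p : G.Walk u v) (i : ℕ) :
    p.getVert i ∈ p.support := by
  induction p generalizing i with
  | nil => simp [Walk.getVert]
  | cons h q ih =>
    cases i with
    | zero => simp
    | succ i => simp only [Walk.getVert_cons_succ, Walk.support_cons, List.mem_cons]; right; exact ih i

lemma getVert_injOn {u v : V} {p : G.Walk u v} (hp : p.IsPath) :
    ∀ i ≤ p.length, ∀ j ≤ p.length, p.getVert i = p.getVert j → i = j := by
  induction p with
  | nil => intro i hi j hj _; simp at hi hj; omega
  | cons h q ih =>
    rw [Walk.cons_isPath_iff] at hp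
    intro i hi j hj hij
    match i, j with
    | 0, 0 => rfl
    | 0, (j+1) =>
      exfalso
      rw [Walk.getVert_zero, Walk.getVert_cons_succ] at hij
      exact hp.2 (hij ▸ getVert_mem_support q j)
    | (i+1), 0 =>
      exfalso
      rw [Walk.getVert_zero, Walk.getVert_cons_succ] at hij
      exact hp.2 (hij ▸ getVert_mem_support q i)
    | (i+1), (j+1) =>
      rw [Walk.getVert_cons_succ, Walk.getVert_cons_succ] at hij
      rw [Walk.length_cons] at hi hj
      exact congrArg (· + 1) (ih hp.1 i (by omega) j (by omega) hij)

lemma eq_of_getVert {u v : V} (p : G.Walk u v) :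
    ∀ (q : G.Walk u v), p.length = q.length → (∀ i, p.getVert i = q.getVert i) → p = q := by
  induction p with
  | nil =>
    intro q hl _
    cases q with
    | nil => rfl
    | cons h r => simp at hl
  | cons h r ih =>
    intro q hl hv
    cases q with
    | nil => simp at hl
    | cons h' r' =>
      have h1 := hv 1
      rw [Walk.getVert_cons_succ, Walk.getVert_cons_succ, Walk.getVert_zero,
        Walk.getVert_zero] at h1
      subst h1
      have := ih r' (by simpa using hl) (fun i => by
        have := hv (i+1)
        rwa [Walk.getVert_cons_succ, Walk.getVert_cons_succ] at this)
      rw [this]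


/-- Build a walk along a vertex function. -/
def walkOfFn (G : SimpleGraph V) (f : ℕ → V) :
    ∀ (i n : ℕ), (∀ k, k < n → G.Adj (f (i + k)) (f (i + k + 1))) → G.Walk (f i) (f (i + n))
  | _, 0, _ => Walk.nil
  | i, (n+1), h =>
    (Walk.cons (by simpa using h 0 (by omega))
      (walkOfFn G f (i+1) n (fun k hk => by
        have := h (k+1) (by omega)
        have e1 : i + 1 + k = i + (k+1) := by omega
        have e2 : i + 1 + k + 1 = i + (k+1) + 1 := by omega
        rw [e1]; exact this))).copy rfl (by congr 1; omega)

lemma walkOfFn_length (f : ℕ → V) :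
    ∀ (i n : ℕ) (h : _), (walkOfFn G f i n h).length = n := by
  intro i n
  induction n generalizing i with
  | zero => intro h; simp [walkOfFn]
  | succ n ih => intro h; simp [walkOfFn, ih]

lemma walkOfFn_edges (f : ℕ → V) :
    ∀ (i n : ℕ) (h : _), (walkOfFn G f i n h).edges
      = (List.range n).map (fun k => s(f (i + k), f (i + k + 1))) := by
  intro i n
  induction n generalizing i with
  | zero => intro h; simp [walkOfFn]
  | succ n ih =>
    intro h
    simp only [walkOfFn, Walk.edges_copy, Walk.edges_cons, ih]
    rw [List.range_succ_eq_map, List.map_cons, List.map_map]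
    refine List.cons_eq_cons.mpr ⟨by norm_num, ?_⟩
    refine List.map_eq_map_iff.mpr (fun k _ => ?_)
    simp only [Function.comp_apply, Nat.succ_eq_add_one]
    rw [Sym2.eq_iff]
    exact Or.inl ⟨congrArg f (by omega), congrArg f (by omega)⟩

lemma walkOfFn_support (f : ℕ → V) :
    ∀ (i n : ℕ) (h : _), (walkOfFn G f i n h).support
      = (List.range (n+1)).map (fun k => f (i + k)) := by
  intro i n
  induction n generalizing i with
  | zero => intro h; simp [walkOfFn, List.range_succ]
  | succ n ih =>
    intro h
    simp only [walkOfFn, Walk.support_copy, Walk.support_cons, ih]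
    conv_rhs => rw [List.range_succ_eq_map, List.map_cons, List.map_map]
    refine List.cons_eq_cons.mpr ⟨by norm_num, ?_⟩
    refine List.map_eq_map_iff.mpr (fun k _ => ?_)
    simp only [Function.comp_apply, Nat.succ_eq_add_one]
    exact congrArg f (by omega)

lemma walkOfFn_isPath (f : ℕ → V) (i n : ℕ) (h : ∀ k, k < n → G.Adj (f (i + k)) (f (i + k + 1)))
    (hinj : ∀ a ≤ n, ∀ b ≤ n, f (i + a) = f (i + b) → a = b) :
    (walkOfFn G f i n h).IsPath := by
  rw [Walk.isPath_def, walkOfFn_support]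
  rw [List.nodup_map_iff_inj_on List.nodup_range]
  intro a ha b hb hab
  rw [List.mem_range] at ha hb
  exact hinj a (by omega) b (by omega) hab

lemma loop_path_nil {a : V} (p : G.Walk a a) (hp : p.IsPath) : p = Walk.nil := by
  have := Path.loop_eq ⟨p, hp⟩
  simpa [Path.nil] using congrArg Subtype.val this

/-- Two short paths with the same endpoints must be equal, when all cycles are long. -/
lemma short_paths_unique {a b : V} (p1 : G.Walk a b) :
    ∀ (p2 : G.Walk a b), p1.IsPath → p2.IsPath →
    (∀ (c : V) (w : G.Walk c c), w.IsCycle → p1.length + p2.length < w.length) →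
    p1 = p2 := by
  haveI := Classical.decEq V
  induction p1 with
  | nil =>
    intro p2 _ h2 _
    exact (loop_path_nil p2 h2).symm
  | @cons a c b hadj q1 ih =>
    intro p2 h1 h2 hbig
    cases p2 with
    | nil =>
      exact absurd (loop_path_nil _ h1) (by simp)
    | @cons _ c2 _ hadj2 q2 =>
      rw [Walk.cons_isPath_iff] at h1 h2
      by_cases hc : c = c2
      · subst hc
        have := ih q2 h1.1 h2.1 (fun d w hw => by
          have := hbig d w hw; simp only [Walk.length_cons] at this; omega)
        subst this
        rfl
      · exfalso
        set r := (q1.append q2.reverse).bypass with hr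
        have hrp : r.IsPath := Walk.bypass_isPath _
        have hra : a ∉ r.support := by
          intro hmem
          have := Walk.support_bypass_subset _ hmem
          rw [Walk.mem_support_append_iff] at this
          rcases this with h' | h'
          · exact h1.2 h'
          · rw [Walk.support_reverse, List.mem_reverse] at h'
            exact h2.2 h'
        have hrl : r.length ≤ q1.length + q2.length := by
          calc r.length ≤ (q1.append q2.reverse).length := Walk.length_bypass_le _
          _ = q1.length + q2.length := by simp
        have htail : (r.concat hadj2.symm).IsPath := by
          rw [← Walk.isPath_reverse_iff, Walk.reverse_concat, Walk.cons_isPath_iff]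
          refine ⟨(Walk.isPath_reverse_iff r).mpr hrp, ?_⟩
          rw [Walk.support_reverse, List.mem_reverse]
          exact hra
        have hcyc : (Walk.cons hadj (r.concat hadj2.symm)).IsCycle := by
          rw [Walk.cons_isCycle_iff]
          refine ⟨htail, ?_⟩
          rw [Walk.edges_concat, List.concat_eq_append, List.mem_append]
          rintro (hmem | hmem)
          · exact hra (Walk.fst_mem_support_of_mem_edges r hmem)
          · simp only [List.mem_singleton] at hmem
            rw [Sym2.eq_iff] at hmem
            rcases hmem with ⟨h', h''⟩ | ⟨h', h''⟩
            · exact (G.irrefl (h'' ▸ hadj))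
            · exact hc h''
        have := hbig a _ hcyc
        simp only [Walk.length_cons, Walk.length_concat] at this
        omega

lemma between (γ : ℕ) (hγ : 1 ≤ γ) (pv qv : ℕ → V)
    (hadjp : ∀ i, i < γ → G.Adj (pv i) (pv (i+1)))
    (hadjq : ∀ i, i < γ → G.Adj (qv i) (qv (i+1)))
    (hinjq : ∀ a, a ≤ γ → ∀ b, b ≤ γ → qv a = qv b → a = b)
    (hgirthN : ∀ (c : V) (w : G.Walk c c), w.IsCycle → 6*γ ≤ w.length)
    (ta sa tb sb k : ℕ)
    (hMa : ta < γ ∧ sa < γ ∧ s(qv ta, qv (ta+1)) = s(pv sa, pv (sa+1)))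
    (hMb : tb < γ ∧ sb < γ ∧ s(qv tb, qv (tb+1)) = s(pv sb, pv (sb+1)))
    (hk1 : ta < k) (hk2 : k < tb) :
    ∃ s, s < γ ∧ s(qv k, qv (k+1)) = s(pv s, pv (s+1)) := by
  obtain ⟨hta, hsa, hEa⟩ := hMa
  obtain ⟨htb, hsb, hEb⟩ := hMb
  -- endpoints on p
  have hea : ∃ a', a' ≤ γ ∧ qv (ta+1) = pv a' := by
    rw [Sym2.eq_iff] at hEa
    rcases hEa with ⟨_, h2⟩ | ⟨_, h2⟩
    · exact ⟨sa+1, by omega, h2⟩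
    · exact ⟨sa, by omega, h2⟩
  have heb : ∃ b', b' ≤ γ ∧ qv tb = pv b' := by
    rw [Sym2.eq_iff] at hEb
    rcases hEb with ⟨h1, _⟩ | ⟨h1, _⟩
    · exact ⟨sb, by omega, h1⟩
    · exact ⟨sb+1, by omega, h1⟩
  obtain ⟨a', ha', ea⟩ := hea
  obtain ⟨b', hb', eb⟩ := heb
  -- the q-segment
  have hL : ta + 1 + (tb - (ta+1)) = tb := by omega
  have hadjseg : ∀ j, j < tb - (ta+1) → G.Adj (qv (ta+1+j)) (qv (ta+1+j+1)) :=
    fun j hj => hadjq _ (by omega)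
  set qseg0 := walkOfFn G qv (ta+1) (tb - (ta+1)) hadjseg with hqseg0
  set qseg : G.Walk (qv (ta+1)) (qv tb) := qseg0.copy rfl (congrArg qv hL) with hqseg
  have hqsegP : qseg.IsPath := by
    rw [hqseg, Walk.isPath_copy]
    exact walkOfFn_isPath qv _ _ hadjseg
      (fun x hx y hy hxy => by
        have := hinjq (ta+1+x) (by omega) (ta+1+y) (by omega) hxy
        omega)
  have hqsegL : qseg.length = tb - (ta+1) := by
    rw [hqseg, Walk.length_copy, hqseg0, walkOfFn_length]
  -- the p-side walk
  have hadjpa : ∀ j, j < a' → G.Adj (pv (0+j)) (pv (0+j+1)) := by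
    intro j hj
    have := hadjp j (by omega)
    simpa using this
  have hadjpb : ∀ j, j < b' → G.Adj (pv (0+j)) (pv (0+j+1)) := by
    intro j hj
    have := hadjp j (by omega)
    simpa using this
  classical
  set pwalk := ((walkOfFn G pv 0 a' hadjpa).reverse.append (walkOfFn G pv 0 b' hadjpb)).bypass
    with hpwalk
  have hpwP : pwalk.IsPath := Walk.bypass_isPath _
  have hpwL : pwalk.length ≤ a' + b' := by
    calc pwalk.length ≤ _ := Walk.length_bypass_le _
    _ = a' + b' := by rw [Walk.length_append, Walk.length_reverse, walkOfFn_length,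
      walkOfFn_length]
  have hpwE : ∀ e ∈ pwalk.edges, ∃ m, m < γ ∧ e = s(pv m, pv (m+1)) := by
    intro e he
    have := Walk.edges_bypass_subset _ he
    rw [Walk.edges_append, List.mem_append, Walk.edges_reverse, List.mem_reverse] at this
    rcases this with h' | h' <;>
    · rw [walkOfFn_edges, List.mem_map] at h'
      obtain ⟨m, hm, hme⟩ := h'
      rw [List.mem_range] at hm
      exact ⟨m, by omega, by
        rw [← hme, Sym2.eq_iff]
        exact Or.inl ⟨congrArg pv (by omega), congrArg pv (by omega)⟩⟩
  -- cast pwalk to the q endpoints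
  set pseg : G.Walk (qv (ta+1)) (qv tb) :=
    pwalk.copy (by rw [ea]; congr 1; omega) (by rw [eb]; congr 1; omega) with hpseg
  have heq : qseg = pseg := by
    apply short_paths_unique _ _ hqsegP (by rw [hpseg, Walk.isPath_copy]; exact hpwP)
    intro c wc hwc
    have h6 := hgirthN c wc hwc
    have h1 : qseg.length ≤ γ := by omega
    have h2 : pseg.length ≤ 2*γ := by
      rw [hpseg, Walk.length_copy]
      omega
    omega
  -- extract edge of position k
  have hkmem : s(qv k, qv (k+1)) ∈ qseg.edges := by
    rw [hqseg, Walk.edges_copy, hqseg0, walkOfFn_edges, List.mem_map]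
    refine ⟨k - (ta+1), by rw [List.mem_range]; omega, ?_⟩
    rw [Sym2.eq_iff]
    exact Or.inl ⟨congrArg qv (by omega), congrArg qv (by omega)⟩
  rw [heq, hpseg, Walk.edges_copy] at hkmem
  obtain ⟨m, hm, hme⟩ := hpwE _ hkmem
  exact ⟨m, hm, hme⟩

abbrev Apred {V S : Type} (γ : ℕ) (ℓ ℓ' : V → V → S) (pv : ℕ → V) (t : ℕ) : Prop :=
  t < γ ∧ ℓ (pv t) (pv (t+1)) ≠ ℓ' (pv t) (pv (t+1))

abbrev Mrel (γ : ℕ) (pv qv : ℕ → V) (t s : ℕ) : Prop :=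
  t < γ ∧ s < γ ∧ s(qv t, qv (t+1)) = s(pv s, pv (s+1))

lemma main_comb {S : Type} (γ : ℕ) (hγ : 1 ≤ γ)
    (inv : S → S) (hinv : Function.Involutive inv) (hfpf : ∀ a, inv a ≠ a)
    (ℓ ℓ' : V → V → S)
    (hl : ∀ x y, G.Adj x y → ℓ y x = inv (ℓ x y))
    (hl' : ∀ x y, G.Adj x y → ℓ' y x = inv (ℓ' x y))
    (hr : ∀ a b c, G.Adj a b → G.Adj a c → b ≠ c → ℓ a b ≠ ℓ a c)
    (pv qv : ℕ → V)
    (hadjp : ∀ i, i < γ → G.Adj (pv i) (pv (i+1)))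
    (hadjq : ∀ i, i < γ → G.Adj (qv i) (qv (i+1)))
    (hinjp : ∀ a, a ≤ γ → ∀ b, b ≤ γ → pv a = pv b → a = b)
    (hinjq : ∀ a, a ≤ γ → ∀ b, b ≤ γ → qv a = qv b → a = b)
    (hgirthN : ∀ (c : V) (w : G.Walk c c), w.IsCycle → 6*γ ≤ w.length)
    (hagree' : ∀ a b, G.Adj a b → (∀ i, i < γ → s(a,b) ≠ s(pv i, pv (i+1))) → ℓ a b = ℓ' a b)
    (hWq : ∀ i, i < γ → ℓ (qv i) (qv (i+1)) = ℓ (pv i) (pv (i+1)))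
    (hWq' : ∀ i, i < γ → ℓ' (qv i) (qv (i+1)) = ℓ' (pv i) (pv (i+1)))
    (hne : ¬ (∀ m, m ≤ γ → qv m = pv m)) :
    ∀ i, i < γ → ℓ (pv i) (pv (i+1)) = ℓ' (pv i) (pv (i+1)) := by
  classical
  by_contra hcon
  push_neg at hcon
  obtain ⟨tw, htw, hnew⟩ := hcon
  have hAex : ∃ t, Apred γ ℓ ℓ' pv t := ⟨tw, htw, hnew⟩
  -- determinism: a shared vertex at the same position forces q = p
  have hdet : ∀ j, j ≤ γ → qv j = pv j → False := by
    intro j hj hshare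
    have fwd : ∀ d, j + d ≤ γ → qv (j + d) = pv (j + d) := by
      intro d
      induction d with
      | zero => intro _; simpa using hshare
      | succ d ih =>
        intro hd
        have hm : qv (j + d) = pv (j + d) := ih (by omega)
        have hmγ : j + d < γ := by omega
        show qv (j + d + 1) = pv (j + d + 1)
        by_contra hne2
        have hadj1 : G.Adj (pv (j+d)) (qv (j+d+1)) := hm ▸ hadjq _ hmγ
        have hcontra := hr (pv (j+d)) (qv (j+d+1)) (pv (j+d+1)) hadj1 (hadjp _ hmγ) hne2
        have hlabel := hWq _ hmγ
        rw [hm] at hlabel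
        exact hcontra hlabel
    have bwd : ∀ d, d ≤ j → qv (j - d) = pv (j - d) := by
      intro d
      induction d with
      | zero => intro _; simpa using hshare
      | succ d ih =>
        intro hd
        have hm : qv (j - d) = pv (j - d) := ih (by omega)
        set e := j - (d+1) with he
        have hje : j - d = e + 1 := by omega
        rw [hje] at hm
        have heγ : e < γ := by omega
        show qv e = pv e
        by_contra hne2
        have hadj1 : G.Adj (pv (e+1)) (qv e) := hm ▸ (hadjq e heγ).symm
        have hcontra := hr (pv (e+1)) (qv e) (pv e) hadj1 (hadjp e heγ).symm hne2
        apply hcontra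
        have c1 : ℓ (pv (e+1)) (qv e) = inv (ℓ (qv e) (qv (e+1))) := by
          rw [← hm]
          exact hl _ _ (hadjq e heγ)
        have c2 : inv (ℓ (qv e) (qv (e+1))) = inv (ℓ (pv e) (pv (e+1))) :=
          congrArg inv (hWq e heγ)
        have c3 : ℓ (pv (e+1)) (pv e) = inv (ℓ (pv e) (pv (e+1))) := hl _ _ (hadjp e heγ)
        exact (c1.trans c2).trans c3.symm
    apply hne
    intro m hm
    rcases le_or_gt m j with h | h
    · have := bwd (j - m) (by omega)
      have hjm : j - (j - m) = m := by omega
      rwa [hjm] at this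
    · have := fwd (m - j) (by omega)
      have hjm : j + (m - j) = m := by omega
      rwa [hjm] at this
  -- uniqueness of the matched p-position
  have hMuniq : ∀ t s1 s2, Mrel γ pv qv t s1 → Mrel γ pv qv t s2 → s1 = s2 := by
    rintro t s1 s2 ⟨_, hs1, e1⟩ ⟨_, hs2, e2⟩
    have e := e1.symm.trans e2
    rw [Sym2.eq_iff] at e
    rcases e with ⟨h1, _⟩ | ⟨h1, h2⟩
    · exact hinjp s1 (by omega) s2 (by omega) h1
    · have := hinjp s1 (by omega) (s2+1) (by omega) h1
      have := hinjp (s1+1) (by omega) s2 (by omega) h2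
      omega
  have hMinj : ∀ t1 t2 s, Mrel γ pv qv t1 s → Mrel γ pv qv t2 s → t1 = t2 := by
    rintro t1 t2 s ⟨ht1, hs, e1⟩ ⟨ht2, _, e2⟩
    have e := e1.trans e2.symm
    rw [Sym2.eq_iff] at e
    rcases e with ⟨h1, _⟩ | ⟨h1, h2⟩
    · exact hinjq t1 (by omega) t2 (by omega) h1
    · have := hinjq t1 (by omega) (t2+1) (by omega) h1
      have := hinjq (t1+1) (by omega) t2 (by omega) h2
      omega
  -- every disagreeing position is matched to a disagreeing position
  have hS1 : ∀ t, Apred γ ℓ ℓ' pv t → ∃ s, Mrel γ pv qv t s ∧ Apred γ ℓ ℓ' pv s := by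
    rintro t ⟨htγ, hnet⟩
    have hlt : ℓ (qv t) (qv (t+1)) ≠ ℓ' (qv t) (qv (t+1)) := by
      rw [hWq t htγ, hWq' t htγ]
      exact hnet
    have hmatch : ¬ (∀ i, i < γ → s(qv t, qv (t+1)) ≠ s(pv i, pv (i+1))) :=
      fun hall => hlt (hagree' _ _ (hadjq t htγ) hall)
    push_neg at hmatch
    obtain ⟨s, hsγ, hedge⟩ := hmatch
    refine ⟨s, ⟨htγ, hsγ, hedge⟩, hsγ, ?_⟩
    rw [Sym2.eq_iff] at hedge
    rcases hedge with ⟨h1, h2⟩ | ⟨h1, h2⟩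
    · intro hss
      apply hnet
      have ew : ℓ (pv t) (pv (t+1)) = ℓ (pv s) (pv (s+1)) := by
        rw [← hWq t htγ, h1, h2]
      have ew' : ℓ' (pv t) (pv (t+1)) = ℓ' (pv s) (pv (s+1)) := by
        rw [← hWq' t htγ, h1, h2]
      rw [ew, ew', hss]
    · intro hss
      apply hnet
      have ew : ℓ (pv t) (pv (t+1)) = inv (ℓ (pv s) (pv (s+1))) := by
        rw [← hWq t htγ, h1, h2]
        exact hl _ _ (hadjp s hsγ)
      have ew' : ℓ' (pv t) (pv (t+1)) = inv (ℓ' (pv s) (pv (s+1))) := by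
        rw [← hWq' t htγ, h1, h2]
        exact hl' _ _ (hadjp s hsγ)
      rw [ew, ew', hss]
  -- consecutive matched positions
  have hStep : ∀ k s1 s2, Mrel γ pv qv k s1 → Mrel γ pv qv (k+1) s2 →
      (s2 = s1 + 1 ∧ qv k = pv s1 ∧ qv (k+1) = pv s2 ∧ qv (k+2) = pv (s2+1)) ∨
      (s1 = s2 + 1 ∧ qv k = pv (s1+1) ∧ qv (k+1) = pv s1 ∧ qv (k+2) = pv s2) := by
    intro k s1 s2 m1 m2
    have hs12 : s1 ≠ s2 := by
      intro h
      have := hMinj k (k+1) s1 m1 (h ▸ m2)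
      omega
    obtain ⟨hk, hs1, e1⟩ := m1
    obtain ⟨hk1, hs2, e2⟩ := m2
    rw [Sym2.eq_iff] at e1 e2
    rcases e1 with ⟨a1, a2⟩ | ⟨a1, a2⟩ <;> rcases e2 with ⟨b1, b2⟩ | ⟨b1, b2⟩
    · -- fwd / fwd
      have : s1 + 1 = s2 := hinjp (s1+1) (by omega) s2 (by omega) (a2.symm.trans b1)
      exact Or.inl ⟨this.symm, a1, b1, b2⟩
    · -- fwd / rev
      exfalso
      have := hinjp (s1+1) (by omega) (s2+1) (by omega) (a2.symm.trans b1)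
      omega
    · -- rev / fwd
      exfalso
      have := hinjp s1 (by omega) s2 (by omega) (a2.symm.trans b1)
      omega
    · -- rev / rev
      have : s1 = s2 + 1 := hinjp s1 (by omega) (s2+1) (by omega) (a2.symm.trans b1)
      exact Or.inr ⟨this, a1, a2, b2⟩
  -- extremal disagreeing positions
  set t0 := Nat.find hAex with ht0
  have hAt0 : Apred γ ℓ ℓ' pv t0 := Nat.find_spec hAex
  have ht0min : ∀ s, Apred γ ℓ ℓ' pv s → t0 ≤ s :=
    fun s hs => le_of_not_gt (fun h => Nat.find_min hAex h hs)
  set t1 := Nat.findGreatest (Apred γ ℓ ℓ' pv) γ with ht1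
  have hAt1 : Apred γ ℓ ℓ' pv t1 := Nat.findGreatest_spec (le_of_lt hAt0.1) hAt0
  have ht1max : ∀ s, Apred γ ℓ ℓ' pv s → s ≤ t1 :=
    fun s hs => Nat.le_findGreatest (le_of_lt hs.1) hs
  have ht0t1 : t0 ≤ t1 := ht1max t0 hAt0
  obtain ⟨s0, hMt0, hAs0⟩ := hS1 t0 hAt0
  obtain ⟨s1, hMt1, hAs1⟩ := hS1 t1 hAt1
  have hs0low : t0 ≤ s0 := ht0min s0 hAs0
  have hs0high : s0 ≤ t1 := ht1max s0 hAs0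
  have hs1low : t0 ≤ s1 := ht0min s1 hAs1
  have hs1high : s1 ≤ t1 := ht1max s1 hAs1
  rcases eq_or_lt_of_le ht0t1 with heq01 | hlt01
  · -- single disagreeing position
    have hs0 : s0 = t0 := by omega
    rw [hs0] at hMt0
    obtain ⟨ht0γ, _, e⟩ := hMt0
    rw [Sym2.eq_iff] at e
    rcases e with ⟨h1, _⟩ | ⟨h1, h2⟩
    · exact hdet t0 (by omega) h1
    · -- reversed self-match: fixed point of the involution
      have : ℓ (pv t0) (pv (t0+1)) = inv (ℓ (pv t0) (pv (t0+1))) := by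
        conv_lhs => rw [← hWq t0 ht0γ]
        rw [h1, h2]
        exact hl _ _ (hadjp t0 ht0γ)
      exact hfpf (ℓ (pv t0) (pv (t0+1))) this.symm
  · -- at least two disagreeing positions
    have hMall : ∀ k, t0 ≤ k → k ≤ t1 → ∃ s, Mrel γ pv qv k s := by
      intro k h1 h2
      rcases eq_or_lt_of_le h1 with h | h
      · exact ⟨s0, h ▸ hMt0⟩
      rcases eq_or_lt_of_le h2 with h' | h'
      · exact ⟨s1, h' ▸ hMt1⟩
      · obtain ⟨s, hsγ, he⟩ :=
          between γ hγ pv qv hadjp hadjq hinjq hgirthN t0 s0 t1 s1 k hMt0 hMt1 h h'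
        exact ⟨s, Nat.lt_trans h' hMt1.1, hsγ, he⟩
    obtain ⟨sA, hMA⟩ := hMall (t0+1) (by omega) (by omega)
    rcases hStep t0 s0 sA hMt0 hMA with ⟨hup, _, _, _⟩ | ⟨hdown, _, _, _⟩
    · -- UP direction
      have dir : ∀ d, t0 + d + 1 ≤ t1 → ∀ s s', Mrel γ pv qv (t0+d) s →
          Mrel γ pv qv (t0+d+1) s' → s' = s + 1 := by
        intro d
        induction d with
        | zero =>
          intro _ s s' m m'
          have e1 := hMuniq t0 s0 s hMt0 m
          have e2 := hMuniq (t0+1) sA s' hMA m'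
          omega
        | succ d ih =>
          intro hle s s' m m'
          obtain ⟨sp, hsp⟩ := hMall (t0+d) (by omega) (by omega)
          have hd : s = sp + 1 := ih (by omega) sp s hsp m
          rcases hStep (t0+d+1) s s' m m' with ⟨h, _, _, _⟩ | ⟨h, _, _, _⟩
          · exact h
          · exfalso
            have hss : s' = sp := by omega
            rw [hss] at m'
            have := hMinj (t0+d) (t0+d+1+1) sp hsp m'
            omega
      have lin : ∀ d, t0 + d ≤ t1 → ∀ s, Mrel γ pv qv (t0+d) s → s = s0 + d := by
        intro d
        induction d with
        | zero => intro _ s m; have := hMuniq t0 s0 s hMt0 m; omega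
        | succ d ih =>
          intro hle s m
          obtain ⟨sp, hsp⟩ := hMall (t0+d) (by omega) (by omega)
          have h1 := ih (by omega) sp hsp
          have h2 := dir d (by omega) sp s hsp m
          omega
      have hlin1 : s1 = s0 + (t1 - t0) := by
        have e : t0 + (t1 - t0) = t1 := by omega
        exact lin (t1 - t0) (by omega) s1 (by rw [e]; exact hMt1)
      have hs0t0 : s0 = t0 := by omega
      rcases hStep t0 s0 sA hMt0 hMA with ⟨_, h2, _, _⟩ | ⟨h1', _, _, _⟩
      · rw [hs0t0] at h2
        exact hdet t0 (by omega) h2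
      · omega
    · -- DOWN direction
      have dir : ∀ d, t0 + d + 1 ≤ t1 → ∀ s s', Mrel γ pv qv (t0+d) s →
          Mrel γ pv qv (t0+d+1) s' → s = s' + 1 := by
        intro d
        induction d with
        | zero =>
          intro _ s s' m m'
          have e1 := hMuniq t0 s0 s hMt0 m
          have e2 := hMuniq (t0+1) sA s' hMA m'
          omega
        | succ d ih =>
          intro hle s s' m m'
          obtain ⟨sp, hsp⟩ := hMall (t0+d) (by omega) (by omega)
          have hd : sp = s + 1 := ih (by omega) sp s hsp m
          rcases hStep (t0+d+1) s s' m m' with ⟨h, _, _, _⟩ | ⟨h, _, _, _⟩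
          · exfalso
            have hss : s' = sp := by omega
            rw [hss] at m'
            have := hMinj (t0+d) (t0+d+1+1) sp hsp m'
            omega
          · exact h
      have lin : ∀ d, t0 + d ≤ t1 → ∀ s, Mrel γ pv qv (t0+d) s → s + d = s0 := by
        intro d
        induction d with
        | zero => intro _ s m; have := hMuniq t0 s0 s hMt0 m; omega
        | succ d ih =>
          intro hle s m
          obtain ⟨sp, hsp⟩ := hMall (t0+d) (by omega) (by omega)
          have h1 := ih (by omega) sp hsp
          have h2 := dir d (by omega) sp s hsp m
          omega
      have hlin1 : s1 + (t1 - t0) = s0 := by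
        have e : t0 + (t1 - t0) = t1 := by omega
        exact lin (t1 - t0) (by omega) s1 (by rw [e]; exact hMt1)
      have hs0t1 : s0 = t1 := by omega
      -- matched index identity: s + k = t0 + t1 for all matched pairs in range
      have hlin' : ∀ k s, t0 ≤ k → k ≤ t1 → Mrel γ pv qv k s → s + k = t0 + t1 := by
        intro k s hk1 hk2 m
        have e : t0 + (k - t0) = k := by omega
        have := lin (k - t0) (by omega) s (by rw [e]; exact m)
        omega
      rcases Nat.even_or_odd (t0 + t1) with hpar | hpar
      · -- even: fixed point, reversed edge
        obtain ⟨mid, hmid⟩ := hpar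
        have hmid1 : t0 ≤ mid := by omega
        have hmid2 : mid + 1 ≤ t1 := by omega
        obtain ⟨sm, hsm⟩ := hMall mid (by omega) (by omega)
        obtain ⟨sm1, hsm1⟩ := hMall (mid+1) (by omega) (by omega)
        have e1 : sm = mid := by have := hlin' mid sm hmid1 (by omega) hsm; omega
        have e2 : sm1 + 1 = mid := by have := hlin' (mid+1) sm1 (by omega) hmid2 hsm1; omega
        rcases hStep mid sm sm1 hsm hsm1 with ⟨h, _, _, _⟩ | ⟨_, hv1, hv2, _⟩
        · omega
        · -- reversed at the fixed point
          rw [e1] at hv1 hv2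
          have hmidγ : mid < γ := by
            have := hsm.1
            omega
          have : ℓ (pv mid) (pv (mid+1)) = inv (ℓ (pv mid) (pv (mid+1))) := by
            conv_lhs => rw [← hWq mid hmidγ]
            rw [hv1, hv2]
            exact hl _ _ (hadjp mid hmidγ)
          exact hfpf (ℓ (pv mid) (pv (mid+1))) this.symm
      · -- odd: two middle positions, reducedness violation
        obtain ⟨sm, hsm⟩ := hpar
        -- t0 + t1 = 2*sm + 1
        have hsm1 : t0 ≤ sm := by omega
        have hsm2 : sm + 1 ≤ t1 := by omega
        obtain ⟨ss, hss⟩ := hMall sm (by omega) (by omega)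
        obtain ⟨ss1, hss1⟩ := hMall (sm+1) (by omega) (by omega)
        have e1 : ss = sm + 1 := by have := hlin' sm ss hsm1 (by omega) hss; omega
        have e2 : ss1 = sm := by have := hlin' (sm+1) ss1 (by omega) hsm2 hss1; omega
        rcases hStep sm ss ss1 hss hss1 with ⟨h, _, _, _⟩ | ⟨_, _, hv2, hv3⟩
        · omega
        · rw [e1] at hv2
          rw [e2] at hv3
          have hsmγ : sm + 1 < γ := by
            have := hss1.1
            omega
          have hne3 : pv sm ≠ pv (sm+2) := by
            intro h
            have := hinjp sm (by omega) (sm+2) (by omega) h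
            omega
          have hlab : ℓ (pv (sm+1)) (pv sm) = ℓ (pv (sm+1)) (pv (sm+2)) := by
            rw [← hWq (sm+1) hsmγ, hv2, hv3]
          exact hr (pv (sm+1)) (pv sm) (pv (sm+2)) (hadjp sm (by omega)).symm
            (hadjp (sm+1) hsmγ) hne3 hlab
end Statement12Aux


open Statement12Aux in
theorem statement12 (γ : ℕ) (hγ : 1 ≤ γ) (V S : Type) [Fintype S]
    (inv : S → S) (hinv : Function.Involutive inv) (hfpf : ∀ a, inv a ≠ a)
    (G : SimpleGraph V) (hgirth : ((6 * γ : ℕ) : ℕ∞) ≤ G.egirth)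
    (u v : V) (p : G.Walk u v) (hp : p.IsPath) (hpl : p.length = γ)
    (ℓ ℓ' : V → V → S)
    (hl : IsGoodLabelling G inv ℓ) (hl' : IsGoodLabelling G inv ℓ')
    (hr : ReducedLabelling G ℓ) (hr' : ReducedLabelling G ℓ')
    (hagree : ∀ a b, G.Adj a b → s(a, b) ∉ p.edges → ℓ a b = ℓ' a b)
    (hQ : ∃ (x y : V) (q : G.Walk x y), q.IsPath ∧ q.length = γ ∧
      (⟨x, y, q⟩ : Σ a : V, Σ b : V, G.Walk a b) ≠ ⟨u, v, p⟩ ∧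
      walkWord ℓ p = walkWord ℓ q ∧ walkWord ℓ' p = walkWord ℓ' q) :
    ∀ a b, G.Adj a b → ℓ a b = ℓ' a b := by
  classical
  obtain ⟨x, y, q, hq, hql, hqne, hwq, hwq'⟩ := hQ
  have hadjp : ∀ i, i < γ → G.Adj (p.getVert i) (p.getVert (i+1)) :=
    fun i hi => p.adj_getVert_succ (by omega)
  have hadjq : ∀ i, i < γ → G.Adj (q.getVert i) (q.getVert (i+1)) :=
    fun i hi => q.adj_getVert_succ (by omega)
  have hinjp : ∀ a, a ≤ γ → ∀ b, b ≤ γ → p.getVert a = p.getVert b → a = b :=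
    fun a ha b hb h => Statement12Aux.getVert_injOn hp a (by omega) b (by omega) h
  have hinjq : ∀ a, a ≤ γ → ∀ b, b ≤ γ → q.getVert a = q.getVert b → a = b :=
    fun a ha b hb h => Statement12Aux.getVert_injOn hq a (by omega) b (by omega) h
  have hgirthN : ∀ (c : V) (wc : G.Walk c c), wc.IsCycle → 6*γ ≤ wc.length := by
    intro c wc hwc
    have := (le_egirth.mp hgirth) c wc hwc
    exact_mod_cast this
  have hWqpt : ∀ i, i < γ →
      ℓ (q.getVert i) (q.getVert (i+1)) = ℓ (p.getVert i) (p.getVert (i+1)) := by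
    intro i hi
    rw [Statement12Aux.word_spec, Statement12Aux.word_spec, hpl, hql] at hwq
    exact (List.map_eq_map_iff.mp hwq i (List.mem_range.mpr hi)).symm
  have hWq'pt : ∀ i, i < γ →
      ℓ' (q.getVert i) (q.getVert (i+1)) = ℓ' (p.getVert i) (p.getVert (i+1)) := by
    intro i hi
    rw [Statement12Aux.word_spec, Statement12Aux.word_spec, hpl, hql] at hwq'
    exact (List.map_eq_map_iff.mp hwq' i (List.mem_range.mpr hi)).symm
  have hagree' : ∀ a b, G.Adj a b →
      (∀ i, i < γ → s(a,b) ≠ s(p.getVert i, p.getVert (i+1))) → ℓ a b = ℓ' a b := by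
    intro a b hab hnot
    apply hagree a b hab
    rw [Statement12Aux.edges_spec, List.mem_map]
    rintro ⟨i, hi, he⟩
    rw [List.mem_range, hpl] at hi
    exact hnot i hi he.symm
  by_cases hsame : ∀ m, m ≤ γ → q.getVert m = p.getVert m
  · exfalso
    apply hqne
    have hxu : x = u := by
      have := hsame 0 (by omega)
      simpa using this
    have hyv : y = v := by
      have h := hsame γ (le_refl γ)
      have h1 : q.getVert γ = y := by rw [← hql]; exact Walk.getVert_length q
      have h2 : p.getVert γ = v := by rw [← hpl]; exact Walk.getVert_length p
      rw [h1, h2] at h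
      exact h
    subst hxu
    subst hyv
    have hqp : q = p := by
      apply Statement12Aux.eq_of_getVert q p (by rw [hql, hpl])
      intro i
      rcases le_or_gt i γ with h | h
      · exact hsame i h
      · rw [Walk.getVert_of_length_le q (by omega), Walk.getVert_of_length_le p (by omega)]
    rw [hqp]
  · have hmain := Statement12Aux.main_comb γ hγ inv hinv hfpf ℓ ℓ' hl hl' hr
      p.getVert q.getVert hadjp hadjq hinjp hinjq hgirthN hagree' hWqpt hWq'pt hsame
    intro a b hab
    by_cases hmem : s(a,b) ∈ p.edges
    · rw [Statement12Aux.edges_spec, List.mem_map] at hmem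
      obtain ⟨i, hi, he⟩ := hmem
      rw [List.mem_range, hpl] at hi
      rw [Sym2.eq_iff] at he
      rcases he with ⟨h1, h2⟩ | ⟨h1, h2⟩
      · rw [← h1, ← h2]
        exact hmain i hi
      · rw [← h1, ← h2]
        rw [hl _ _ (hadjp i hi), hl' _ _ (hadjp i hi), hmain i hi]
    · exact hagree a b hab hmem
end
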